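/- The correlation gap of a monotone submodular function f: 2^N → [0,∞) is at most e/(e-1): for any distribution D on 2^N with marginals q_i = Pr_{S~D}[i ∈ S], the expectation of f over the independent distribution with the same marginals is at least (1 - 1/e) times E_{S~D}[f(S)]. -/

import Mathlib

open Finset

/-- The marginal probability of element `i` under a distribution `D` on `2^N`. -/
noncomputable def marginal {n : ℕ} (D : Finset (Fin n) → ℝ) (i : Fin n) : ℝ :=
  ∑ S ∈ Finset.univ.filter (fun S : Finset (Fin n) => i ∈ S), D S

/-- Expectation of `f` when each element `i` is included independently with
probability `q i`. -/
noncomputable def indepExp {n : ℕ} (q : Fin n → ℝ) (f : Finset (Fin n) → ℝ) : ℝ :=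
  ∑ S : Finset (Fin n), ((∏ i ∈ S, q i) * ∏ i ∈ Sᶜ, (1 - q i)) * f S

namespace CorrGap
variable {n : ℕ}

/-- Expectation of `g` under the product measure with marginals `x`, over ground set `T`. -/
noncomputable def Ex (T : Finset (Fin n)) (x : Fin n → ℝ) (g : Finset (Fin n) → ℝ) : ℝ :=
  ∑ S ∈ T.powerset, ((∏ i ∈ S, x i) * ∏ i ∈ T \ S, (1 - x i)) * g S

lemma Ex_insert {a : Fin n} {T : Finset (Fin n)} (ha : a ∉ T) (x : Fin n → ℝ)
    (g : Finset (Fin n) → ℝ) :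
    Ex (insert a T) x g = x a * Ex T x (fun S => g (insert a S)) + (1 - x a) * Ex T x g := by
  unfold Ex
  rw [Finset.powerset_insert, Finset.sum_union, Finset.sum_image]
  · have h1 : ∀ S ∈ T.powerset,
        ((∏ i ∈ S, x i) * ∏ i ∈ insert a T \ S, (1 - x i)) * g S
          = (1 - x a) * (((∏ i ∈ S, x i) * ∏ i ∈ T \ S, (1 - x i)) * g S) := by
      intro S hS
      rw [Finset.mem_powerset] at hS
      have haS : a ∉ S := fun h => ha (hS h)
      have : insert a T \ S = insert a (T \ S) := by
        ext i
        simp only [Finset.mem_sdiff, Finset.mem_insert]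
        have : i = a → i ∉ S := fun h => h ▸ haS
        tauto
      rw [this, Finset.prod_insert (by simp [ha])]
      ring
    have h2 : ∀ S ∈ T.powerset,
        ((∏ i ∈ insert a S, x i) * ∏ i ∈ insert a T \ insert a S, (1 - x i)) * g (insert a S)
          = x a * (((∏ i ∈ S, x i) * ∏ i ∈ T \ S, (1 - x i)) * g (insert a S)) := by
      intro S hS
      rw [Finset.mem_powerset] at hS
      have haS : a ∉ S := fun h => ha (hS h)
      have : insert a T \ insert a S = T \ S := by
        ext i
        simp only [Finset.mem_sdiff, Finset.mem_insert]
        have : i ∈ T → ¬ i = a := fun h e => ha (e ▸ h)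
        tauto
      rw [this, Finset.prod_insert haS]
      ring
    rw [Finset.sum_congr rfl h1, Finset.sum_congr rfl h2, ← Finset.mul_sum, ← Finset.mul_sum]
    ring
  · intro S hS S' hS' hEq
    rw [Finset.mem_coe, Finset.mem_powerset] at hS hS'
    have haS : a ∉ S := fun h => ha (hS h)
    have haS' : a ∉ S' := fun h => ha (hS' h)
    have := congrArg (fun t => Finset.erase t a) hEq
    simpa [Finset.erase_insert, haS, haS'] using this
  · rw [Finset.disjoint_right]
    intro S hS hS'
    rw [Finset.mem_image] at hS
    obtain ⟨S₀, hS₀, rfl⟩ := hS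
    rw [Finset.mem_powerset] at hS'
    exact ha (hS' (Finset.mem_insert_self a S₀))

lemma Ex_congr {T : Finset (Fin n)} {x : Fin n → ℝ} {g h : Finset (Fin n) → ℝ}
    (hgh : ∀ S, g S = h S) : Ex T x g = Ex T x h := by
  unfold Ex; exact Finset.sum_congr rfl (fun S _ => by rw [hgh])

lemma Ex_empty (x : Fin n → ℝ) (g : Finset (Fin n) → ℝ) : Ex ∅ x g = g ∅ := by
  simp [Ex]

-- affine: Ex of (α • g + β) is affine
lemma Ex_affine (T : Finset (Fin n)) (x : Fin n → ℝ) (α β : ℝ) :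
    ∀ g : Finset (Fin n) → ℝ, Ex T x (fun S => α * g S + β) = α * Ex T x g + β := by
  induction T using Finset.induction_on with
  | empty => intro g; simp [Ex_empty]
  | insert _ _ ha ih =>
      intro g
      rw [Ex_insert ha, Ex_insert ha x g, ih, ih]
      ring

lemma Ex_const (T : Finset (Fin n)) (x : Fin n → ℝ) (c : ℝ) :
    Ex T x (fun _ => c) = c := by
  have := Ex_affine T x 0 c (fun _ => 0)
  simpa using this

lemma Ex_mono_f {T : Finset (Fin n)} {x : Fin n → ℝ} (hx0 : ∀ i, 0 ≤ x i)
    (hx1 : ∀ i, x i ≤ 1) {g h : Finset (Fin n) → ℝ} (hgh : ∀ S, g S ≤ h S) :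
    Ex T x g ≤ Ex T x h := by
  unfold Ex
  apply Finset.sum_le_sum
  intro S _
  have hw : 0 ≤ (∏ i ∈ S, x i) * ∏ i ∈ T \ S, (1 - x i) :=
    mul_nonneg (Finset.prod_nonneg fun i _ => hx0 i)
      (Finset.prod_nonneg fun i _ => by linarith [hx1 i])
  exact mul_le_mul_of_nonneg_left (hgh S) hw

lemma Ex_zero (T : Finset (Fin n)) (g : Finset (Fin n) → ℝ) :
    Ex T (fun _ => 0) g = g ∅ := by
  induction T using Finset.induction_on with
  | empty => simp [Ex_empty]
  | insert _ _ ha ih => rw [Ex_insert ha]; simp [ih]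

lemma Ex_add (T : Finset (Fin n)) (x : Fin n → ℝ) (u v : Finset (Fin n) → ℝ) :
    Ex T x (fun S => u S + v S) = Ex T x u + Ex T x v := by
  unfold Ex
  simp only [mul_add]
  rw [Finset.sum_add_distrib]

lemma Ex_smul (T : Finset (Fin n)) (x : Fin n → ℝ) (c : ℝ) (u : Finset (Fin n) → ℝ) :
    Ex T x (fun S => c * u S) = c * Ex T x u := by
  unfold Ex
  simp only [Finset.mul_sum]
  apply Finset.sum_congr rfl
  intro S _
  ring

lemma Ex_mono_x {x y : Fin n → ℝ} (hx0 : ∀ i, 0 ≤ x i)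
    (hy0 : ∀ i, 0 ≤ y i) (hy1 : ∀ i, y i ≤ 1) (hxy : ∀ i, x i ≤ y i)
    (T : Finset (Fin n)) :
    ∀ g : Finset (Fin n) → ℝ, (∀ S₁ S₂ : Finset (Fin n), S₁ ⊆ S₂ → g S₁ ≤ g S₂) →
      Ex T x g ≤ Ex T y g := by
  induction T using Finset.induction_on with
  | empty => intro g _; simp [Ex_empty]
  | @insert a T ha ih =>
      intro g hg
      rw [Ex_insert ha, Ex_insert ha]
      have hgi : ∀ S₁ S₂ : Finset (Fin n), S₁ ⊆ S₂ → g (insert a S₁) ≤ g (insert a S₂) :=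
        fun S₁ S₂ h => hg _ _ (Finset.insert_subset_insert a h)
      have hAB : Ex T y g ≤ Ex T y (fun S => g (insert a S)) :=
        Ex_mono_f hy0 hy1 (fun S => hg S (insert a S) (Finset.subset_insert a S))
      have h1 : Ex T x (fun S => g (insert a S)) ≤ Ex T y (fun S => g (insert a S)) :=
        ih _ hgi
      have h2 : Ex T x g ≤ Ex T y g := ih _ hg
      have hx1a : x a ≤ 1 := le_trans (hxy a) (hy1 a)
      nlinarith [hx0 a, hy0 a, hy1 a, hxy a]

lemma Ex_union (T : Finset (Fin n)) (x d : Fin n → ℝ) :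
    ∀ g : Finset (Fin n) → ℝ,
      Ex T (fun i => x i + d i - x i * d i) g
        = Ex T x (fun R => Ex T d (fun N => g (R ∪ N))) := by
  induction T using Finset.induction_on with
  | empty => intro g; simp [Ex_empty]
  | @insert a T ha ih =>
      intro g
      rw [Ex_insert ha, Ex_insert ha x]
      have inner1 : ∀ R : Finset (Fin n),
          Ex (insert a T) d (fun N => g (insert a R ∪ N))
            = Ex T d (fun N => g (insert a (R ∪ N))) := by
        intro R
        rw [Ex_insert ha]
        have e1 : ∀ N, g (insert a R ∪ insert a N) = g (insert a (R ∪ N)) := by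
          intro N
          congr 1
          ext i; simp only [Finset.mem_union, Finset.mem_insert]; tauto
        have e2 : ∀ N, g (insert a R ∪ N) = g (insert a (R ∪ N)) := by
          intro N
          congr 1
          ext i; simp only [Finset.mem_union, Finset.mem_insert]; tauto
        rw [Ex_congr e1, Ex_congr e2]
        ring
      have inner2 : ∀ R : Finset (Fin n),
          Ex (insert a T) d (fun N => g (R ∪ N))
            = d a * Ex T d (fun N => g (insert a (R ∪ N)))
              + (1 - d a) * Ex T d (fun N => g (R ∪ N)) := by
        intro R
        rw [Ex_insert ha]
        have e1 : ∀ N, g (R ∪ insert a N) = g (insert a (R ∪ N)) := by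
          intro N
          congr 1
          ext i; simp only [Finset.mem_union, Finset.mem_insert]; tauto
        rw [Ex_congr e1]
      rw [Ex_congr inner1, Ex_congr inner2]
      have split : Ex T x (fun R => d a * Ex T d (fun N => g (insert a (R ∪ N)))
            + (1 - d a) * Ex T d (fun N => g (R ∪ N)))
          = d a * Ex T x (fun R => Ex T d (fun N => g (insert a (R ∪ N))))
            + (1 - d a) * Ex T x (fun R => Ex T d (fun N => g (R ∪ N))) := by
        rw [Ex_add, Ex_smul, Ex_smul]
      rw [split]
      have ihA : Ex T (fun i => x i + d i - x i * d i) (fun S => g (insert a S))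
          = Ex T x (fun R => Ex T d (fun N => g (insert a (R ∪ N)))) :=
        ih (fun S => g (insert a S))
      rw [ih g, ihA]
      ring

/-- Step lower bound: adding an independent sparse set gains at least a fraction of
the sum of singleton marginals. Only monotonicity of `f` is used. -/
lemma step_lb (f : Finset (Fin n) → ℝ)
    (hmono : ∀ S T : Finset (Fin n), S ⊆ T → f S ≤ f T)
    {δ : Fin n → ℝ} (hδ0 : ∀ i, 0 ≤ δ i) (hδ1 : ∀ i, δ i ≤ 1)
    (T : Finset (Fin n)) :
    ∀ R : Finset (Fin n),
      f R + (1 - ∑ i ∈ T, δ i) * ∑ i ∈ T, δ i * (f (insert i R) - f R)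
        ≤ Ex T δ (fun N => f (R ∪ N)) := by
  induction T using Finset.induction_on with
  | empty => intro R; simp [Ex_empty]
  | @insert a T ha ih =>
      intro R
      rw [Ex_insert ha]
      have hmarg : ∀ i R', (0:ℝ) ≤ f (insert i R') - f R' := by
        intro i R'
        have := hmono R' (insert i R') (Finset.subset_insert i R')
        linarith
      -- first term: f (R ∪ insert a N) ≥ f (insert a R)
      have hA : f (insert a R) ≤ Ex T δ (fun N => f (R ∪ insert a N)) := by
        have h0 : Ex T δ (fun _ => f (insert a R)) = f (insert a R) := Ex_const T δ _
        rw [← h0]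
        apply Ex_mono_f hδ0 hδ1
        intro N
        apply hmono
        intro i hi
        rw [Finset.mem_insert] at hi
        rcases hi with rfl | hi
        · exact Finset.mem_union_right _ (Finset.mem_insert_self i N)
        · exact Finset.mem_union_left _ hi
      have hB := ih R
      set s := ∑ i ∈ T, δ i with hs
      set t := ∑ i ∈ T, δ i * (f (insert i R) - f R) with ht
      have hs0 : 0 ≤ s := Finset.sum_nonneg fun i _ => hδ0 i
      have ht0 : 0 ≤ t := Finset.sum_nonneg fun i _ => mul_nonneg (hδ0 i) (hmarg i R)
      rw [Finset.sum_insert ha, Finset.sum_insert ha]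
      have hma : 0 ≤ f (insert a R) - f R := hmarg a R
      have hda0 := hδ0 a
      have hda1 := hδ1 a
      nlinarith [mul_nonneg hda0 hma, mul_nonneg hs0 ht0,
        mul_nonneg (mul_nonneg hda0 hs0) ht0, mul_nonneg (mul_nonneg hda0 hda0) hma,
        mul_nonneg (mul_nonneg hda0 hs0) (mul_nonneg hda0 hma),
        mul_nonneg hda0 ht0]

/-- First-order submodular upper bound : `f (R ∪ S) ≤ f R + ∑_{i ∈ S} marginal_i(R)`. -/
lemma submod_first_order (f : Finset (Fin n) → ℝ)
    (hmono : ∀ S T : Finset (Fin n), S ⊆ T → f S ≤ f T)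
    (hsub : ∀ S T : Finset (Fin n), f (S ∪ T) + f (S ∩ T) ≤ f S + f T)
    (R : Finset (Fin n)) :
    ∀ S : Finset (Fin n), f (R ∪ S) ≤ f R + ∑ i ∈ S, (f (insert i R) - f R) := by
  intro S
  induction S using Finset.induction_on with
  | empty => simp
  | @insert a S ha ih =>
      have key := hsub (R ∪ S) (insert a R)
      have hU : (R ∪ S) ∪ insert a R = insert a (R ∪ S) := by
        ext i; simp only [Finset.mem_union, Finset.mem_insert]; tauto
      have hI : R ⊆ (R ∪ S) ∩ insert a R :=
        Finset.subset_inter Finset.subset_union_left (Finset.subset_insert a R)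
      have hfI : f R ≤ f ((R ∪ S) ∩ insert a R) := hmono _ _ hI
      have hRiS : R ∪ insert a S = insert a (R ∪ S) := by
        ext i; simp only [Finset.mem_union, Finset.mem_insert]; tauto
      rw [hRiS, Finset.sum_insert ha]
      rw [hU] at key
      linarith

lemma opt_bound (f : Finset (Fin n) → ℝ)
    (hmono : ∀ S T : Finset (Fin n), S ⊆ T → f S ≤ f T)
    (hsub : ∀ S T : Finset (Fin n), f (S ∪ T) + f (S ∩ T) ≤ f S + f T)
    (D : Finset (Fin n) → ℝ) (hD0 : ∀ S, 0 ≤ D S)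
    (hD1 : ∑ S : Finset (Fin n), D S = 1) (R : Finset (Fin n)) :
    ∑ S : Finset (Fin n), D S * f S
      ≤ f R + ∑ i : Fin n, marginal D i * (f (insert i R) - f R) := by
  have h1 : ∑ S : Finset (Fin n), D S * f S
      ≤ ∑ S : Finset (Fin n), D S * (f R + ∑ i ∈ S, (f (insert i R) - f R)) := by
    apply Finset.sum_le_sum
    intro S _
    apply mul_le_mul_of_nonneg_left _ (hD0 S)
    calc f S ≤ f (R ∪ S) := hmono _ _ Finset.subset_union_right
      _ ≤ f R + ∑ i ∈ S, (f (insert i R) - f R) :=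
          submod_first_order f hmono hsub R S
  have h2 : ∑ S : Finset (Fin n), D S * (f R + ∑ i ∈ S, (f (insert i R) - f R))
      = f R + ∑ i : Fin n, marginal D i * (f (insert i R) - f R) := by
    simp only [mul_add, Finset.sum_add_distrib, ← Finset.sum_mul, hD1, one_mul]
    congr 1
    have h3 : ∀ S : Finset (Fin n), D S * ∑ i ∈ S, (f (insert i R) - f R)
        = ∑ i : Fin n, (if i ∈ S then D S * (f (insert i R) - f R) else 0) := by
      intro S
      rw [Finset.mul_sum, ← Finset.sum_filter]
      apply Finset.sum_congr
      · ext i; simp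
      · intros; rfl
    rw [Finset.sum_congr rfl (fun S _ => h3 S), Finset.sum_comm]
    apply Finset.sum_congr rfl
    intro i _
    rw [marginal, Finset.sum_filter, Finset.sum_mul]
    apply Finset.sum_congr rfl
    intro S _
    split <;> simp
  linarith

lemma indepExp_eq_Ex (q : Fin n → ℝ) (f : Finset (Fin n) → ℝ) :
    indepExp q f = Ex Finset.univ q f := by
  unfold indepExp Ex
  rw [Finset.powerset_univ]
  apply Finset.sum_congr rfl
  intro S _
  rw [Finset.compl_eq_univ_sdiff]

end CorrGap

open CorrGap in
/-- The correlation gap of a monotone submodular nonnegative set function is at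
most `e/(e-1)`: the independent expectation with matching marginals is at least
`(1 - 1/e)` times the correlated expectation. -/
theorem correlation_gap_submodular {n : ℕ} (f : Finset (Fin n) → ℝ)
    (hnonneg : ∀ S, 0 ≤ f S)
    (hmono : ∀ S T : Finset (Fin n), S ⊆ T → f S ≤ f T)
    (hsub : ∀ S T : Finset (Fin n), f (S ∪ T) + f (S ∩ T) ≤ f S + f T)
    (D : Finset (Fin n) → ℝ)
    (hD0 : ∀ S, 0 ≤ D S) (hD1 : ∑ S : Finset (Fin n), D S = 1) :
    (1 - 1 / Real.exp 1) * (∑ S : Finset (Fin n), D S * f S) ≤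
      indepExp (marginal D) f := by
  set q : Fin n → ℝ := marginal D with hqdef
  set OPT : ℝ := ∑ S : Finset (Fin n), D S * f S with hOPTdef
  have hOPT0 : 0 ≤ OPT :=
    Finset.sum_nonneg fun S _ => mul_nonneg (hD0 S) (hnonneg S)
  have hq0 : ∀ i, 0 ≤ q i := fun i => Finset.sum_nonneg fun S _ => hD0 S
  have hq1 : ∀ i, q i ≤ 1 := by
    intro i
    calc q i ≤ ∑ S : Finset (Fin n), D S :=
          Finset.sum_le_sum_of_subset_of_nonneg (Finset.filter_subset _ _)
            (fun S _ _ => hD0 S)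
      _ = 1 := hD1
  have hmarg0 : ∀ (i : Fin n) (R : Finset (Fin n)), 0 ≤ f (insert i R) - f R := by
    intro i R
    have := hmono R (insert i R) (Finset.subset_insert i R)
    linarith
  -- main finite-m bound
  have key : ∀ m : ℕ, n ≤ m → 1 ≤ m →
      (1 - Real.exp (-1 + (n : ℝ) / m)) * OPT ≤ indepExp q f := by
    intro m hnm h1m
    have hm0 : (0:ℝ) < m := by exact_mod_cast h1m
    have hmne : (m:ℝ) ≠ 0 := ne_of_gt hm0
    set δ : Fin n → ℝ := fun i => q i / m with hδdef
    have hδ0 : ∀ i, 0 ≤ δ i := fun i => div_nonneg (hq0 i) (le_of_lt hm0)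
    have hδ1 : ∀ i, δ i ≤ 1 := by
      intro i
      rw [hδdef]
      rw [div_le_one hm0]
      calc q i ≤ 1 := hq1 i
        _ ≤ m := by exact_mod_cast h1m
    set β : ℝ := (1 - (n:ℝ)/m)/m with hβdef
    have hnm' : (n:ℝ) ≤ m := by exact_mod_cast hnm
    have hβ0 : 0 ≤ β := div_nonneg (by rw [sub_nonneg, div_le_one hm0]; exact hnm')
      (le_of_lt hm0)
    have hβ1 : β ≤ 1 := by
      rw [hβdef, div_le_one hm0]
      have : (n:ℝ)/m ≥ 0 := div_nonneg (by positivity) (le_of_lt hm0)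
      calc 1 - (n:ℝ)/m ≤ 1 := by linarith
        _ ≤ m := by exact_mod_cast h1m
    set r : ℝ := 1 - β with hrdef
    set x : ℕ → Fin n → ℝ := fun k i => 1 - (1 - q i / m)^k with hxdef
    have hbase : ∀ i, 0 ≤ 1 - q i / m ∧ 1 - q i / m ≤ 1 := by
      intro i
      constructor
      · have := hδ1 i; rw [hδdef] at this; linarith
      · have := hδ0 i; rw [hδdef] at this; linarith
    have hx0 : ∀ k i, 0 ≤ x k i := by
      intro k i
      have h := hbase i
      have := pow_le_one₀ h.1 h.2 (n := k)
      simp only [hxdef]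
      linarith
    have hx1 : ∀ k i, x k i ≤ 1 := by
      intro k i
      have h := hbase i
      have := pow_nonneg h.1 k
      simp only [hxdef]
      linarith
    -- the iteration bound
    have hF : ∀ k : ℕ, (1 - r^k) * OPT ≤ Ex Finset.univ (x k) f := by
      intro k
      induction k with
      | zero =>
          have : x 0 = fun _ => (0:ℝ) := by
            funext i; simp [hxdef]
          rw [this, Ex_zero]
          simp only [pow_zero, sub_self, zero_mul]
          exact hnonneg ∅
      | succ k ih =>
          have hxext : x (k+1) = fun i => x k i + δ i - x k i * δ i := by
            funext i
            simp only [hxdef, hδdef, pow_succ]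
            ring
          have h1 : Ex Finset.univ (x (k+1)) f
              = Ex Finset.univ (x k) (fun R => Ex Finset.univ δ (fun N => f (R ∪ N))) := by
            rw [hxext]; exact Ex_union _ _ _ f
          -- pointwise bound on inner expectation
          have h2 : ∀ R : Finset (Fin n),
              (1 - β) * f R + β * OPT ≤ Ex Finset.univ δ (fun N => f (R ∪ N)) := by
            intro R
            have hstep := step_lb f hmono hδ0 hδ1 Finset.univ R
            have hopt := opt_bound f hmono hsub D hD0 hD1 R
            set s : ℝ := ∑ i : Fin n, δ i with hsdef
            set t : ℝ := ∑ i : Fin n, δ i * (f (insert i R) - f R) with htdef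
            have ht0 : 0 ≤ t :=
              Finset.sum_nonneg fun i _ => mul_nonneg (hδ0 i) (hmarg0 i R)
            have hsn : s * m ≤ n := by
              have : s = (∑ i : Fin n, q i) / m := by
                rw [hsdef, hδdef, ← Finset.sum_div]
              rw [this, div_mul_cancel₀ _ hmne]
              calc (∑ i : Fin n, q i) ≤ ∑ _i : Fin n, (1:ℝ) :=
                    Finset.sum_le_sum fun i _ => hq1 i
                _ = n := by simp
            have hs0 : 0 ≤ s := Finset.sum_nonneg fun i _ => hδ0 i
            have htu : OPT - f R ≤ m * t := by
              have hmt : (m:ℝ) * t = ∑ i : Fin n, q i * (f (insert i R) - f R) := by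
                rw [htdef, Finset.mul_sum]
                apply Finset.sum_congr rfl
                intro i _
                rw [hδdef]
                field_simp
              have hopt' : OPT ≤ f R + ∑ i : Fin n, q i * (f (insert i R) - f R) := by
                rw [hOPTdef, hqdef]; exact hopt
              rw [hmt]
              linarith
            -- goal: (1-β) f R + β OPT ≤ Ex, have: f R + (1-s) t ≤ Ex
            -- β(OPT - f R) ≤ (1-s) t
            have hβm : β * m = 1 - (n:ℝ)/m := by
              rw [hβdef, div_mul_cancel₀ _ hmne]
            have hnn : (0:ℝ) ≤ 1 - (n:ℝ)/m := by
              rw [sub_nonneg, div_le_one hm0]; exact hnm'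
            have key2 : β * (OPT - f R) ≤ (1 - s) * t := by
              rcases le_or_gt (OPT - f R) 0 with h | h
              · have : β * (OPT - f R) ≤ 0 := mul_nonpos_of_nonneg_of_nonpos hβ0 h
                have h1s : 1 - (n:ℝ)/m ≤ 1 - s := by
                  have : s ≤ (n:ℝ)/m := by
                    rw [le_div_iff₀ hm0]; exact hsn
                  linarith
                nlinarith
              · calc β * (OPT - f R) ≤ β * (m * t) :=
                      mul_le_mul_of_nonneg_left htu hβ0
                  _ = (β * m) * t := by ring
                  _ = (1 - (n:ℝ)/m) * t := by rw [hβm]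
                  _ ≤ (1 - s) * t := by
                      apply mul_le_mul_of_nonneg_right _ ht0
                      have : s ≤ (n:ℝ)/m := by rw [le_div_iff₀ hm0]; exact hsn
                      linarith
            linarith [hstep]
          have h3 : Ex Finset.univ (x k) (fun R => (1 - β) * f R + β * OPT)
              ≤ Ex Finset.univ (x k) (fun R => Ex Finset.univ δ (fun N => f (R ∪ N))) :=
            Ex_mono_f (hx0 k) (hx1 k) h2
          have h4 : Ex Finset.univ (x k) (fun R => (1 - β) * f R + β * OPT)
              = (1 - β) * Ex Finset.univ (x k) f + β * OPT :=
            Ex_affine _ _ _ _ f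
          have hr0 : 0 ≤ r := by rw [hrdef]; linarith
          have hr1 : r ≤ 1 := by rw [hrdef]; linarith
          have hrk : (0:ℝ) ≤ r^k := pow_nonneg hr0 k
          calc (1 - r^(k+1)) * OPT = (1 - β) * ((1 - r^k) * OPT) + β * OPT := by
                rw [pow_succ, hrdef]; ring
            _ ≤ (1 - β) * Ex Finset.univ (x k) f + β * OPT := by
                have := mul_le_mul_of_nonneg_left ih (by linarith : (0:ℝ) ≤ 1 - β)
                linarith
            _ = Ex Finset.univ (x k) (fun R => (1 - β) * f R + β * OPT) := h4.symm
            _ ≤ Ex Finset.univ (x (k+1)) f := by rw [h1]; exact h3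
    -- x m ≤ q
    have hxm : ∀ i, x m i ≤ q i := by
      intro i
      have hber : 1 - q i ≤ (1 - q i / m)^m := by
        have := one_add_mul_le_pow (a := -(q i / m)) (by nlinarith [hδ0 i, hδ1 i]) m
        have hcalc : 1 + (m:ℝ) * -(q i / m) = 1 - q i := by
          field_simp
          ring
        rw [hcalc, ← sub_eq_add_neg] at this
        exact this
      simp only [hxdef]
      linarith
    have hmonof : ∀ S₁ S₂ : Finset (Fin n), S₁ ⊆ S₂ → f S₁ ≤ f S₂ := hmono
    have hfinal : Ex Finset.univ (x m) f ≤ Ex Finset.univ q f :=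
      Ex_mono_x (hx0 m) hq0 hq1 hxm Finset.univ f hmonof
    -- r^m ≤ exp(-1 + n/m)
    have hr0 : 0 ≤ r := by rw [hrdef]; linarith
    have hrexp : r ≤ Real.exp (-β) := by
      have := Real.add_one_le_exp (-β)
      rw [hrdef]; linarith
    have hrm : r^m ≤ Real.exp (-1 + (n:ℝ)/m) := by
      calc r^m ≤ (Real.exp (-β))^m := pow_le_pow_left₀ hr0 hrexp m
        _ = Real.exp (m * (-β)) := by rw [← Real.exp_nat_mul]
        _ = Real.exp (-1 + (n:ℝ)/m) := by
            congr 1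
            rw [hβdef]
            field_simp
            ring
    calc (1 - Real.exp (-1 + (n:ℝ)/m)) * OPT ≤ (1 - r^m) * OPT := by
          apply mul_le_mul_of_nonneg_right _ hOPT0
          linarith
      _ ≤ Ex Finset.univ (x m) f := hF m
      _ ≤ Ex Finset.univ q f := hfinal
      _ = indepExp q f := (indepExp_eq_Ex q f).symm
  -- take the limit m → ∞
  have hlim : Filter.Tendsto (fun m : ℕ => (1 - Real.exp (-1 + (n:ℝ)/m)) * OPT)
      Filter.atTop (nhds ((1 - Real.exp (-1)) * OPT)) := by
    have h1 : Filter.Tendsto (fun m : ℕ => (n:ℝ)/m) Filter.atTop (nhds 0) :=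
      tendsto_const_div_atTop_nhds_zero_nat (n:ℝ)
    have h2 : Filter.Tendsto (fun m : ℕ => -1 + (n:ℝ)/m) Filter.atTop (nhds (-1)) := by
      have := h1.const_add (-1 : ℝ)
      simpa using this
    have h3 : Filter.Tendsto (fun m : ℕ => Real.exp (-1 + (n:ℝ)/m)) Filter.atTop
        (nhds (Real.exp (-1))) := (Real.continuous_exp.tendsto _).comp h2
    have h4 := (h3.const_sub 1).mul_const OPT
    simpa using h4
  have hle : (1 - Real.exp (-1)) * OPT ≤ indepExp q f := by
    apply le_of_tendsto hlim
    filter_upwards [Filter.eventually_ge_atTop (max n 1)] with m hm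
    exact key m (le_trans (le_max_left n 1) hm) (le_trans (le_max_right n 1) hm)
  have : 1 / Real.exp 1 = Real.exp (-1) := by
    rw [Real.exp_neg]; rw [one_div]
  rw [this]
  exact hle
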